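/- arXiv:2011.01796 — 3 statements merged into one kernel-verified Lean document; each statement's English description precedes it below -/
import Mathlib

section
/- (Ryu splitting, weak convergence.) Let A, B, C be maximally monotone set-valued operators on H such that there exists u₀ ∈ H with 0 ∈ (A+B+C)(u₀), let γ > 0 and let λ ∈ (0,1). Let (x_k), (y_k), (u_k), (v_k), (w_k) be sequences in H such that for all k: x_k − u_k ∈ γ•A(u_k); (u_k + y_k) − v_k ∈ γ•B(v_k); (u_k − x_k + v_k − y_k) − w_k ∈ γ•C(w_k); x_{k+1} = x_k + λ(w_k − u_k); and y_{k+1} = y_k + λ(w_k − v_k). Then there exist x, y, u ∈ H such that x_k ⇀ x, y_k ⇀ y, u_k ⇀ u, v_k ⇀ u and w_k ⇀ u weakly, with x − u ∈ γ•A(u), y ∈ γ•B(u) and u − x − y ∈ γ•C(u); in particular 0 ∈ (A+B+C)(u). -/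
open scoped RealInnerProductSpace Pointwise
open Filter Topology

/-- `A` is monotone. -/
def IsMonotoneOp {H : Type*} [NormedAddCommGroup H] [InnerProductSpace ℝ H]
    (A : H → Set H) : Prop :=
  ∀ x y u v : H, u ∈ A x → v ∈ A y → 0 ≤ ⟪x - y, u - v⟫

/-- `A` is maximally monotone. -/
def IsMaxMonotoneOp {H : Type*} [NormedAddCommGroup H] [InnerProductSpace ℝ H]
    (A : H → Set H) : Prop :=
  IsMonotoneOp A ∧
    ∀ x u : H, (∀ y v : H, v ∈ A y → 0 ≤ ⟪x - y, u - v⟫) → u ∈ A x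

section Helpers
variable {H : Type*} [NormedAddCommGroup H] [InnerProductSpace ℝ H]

lemma smul_isMaxMonotoneOp {A : H → Set H} (hA : IsMaxMonotoneOp A) {γ : ℝ} (hγ : 0 < γ) :
    IsMaxMonotoneOp (fun t => γ • A t) := by
  constructor
  · rintro x y u v ⟨a, ha, rfl⟩ ⟨b, hb, rfl⟩
    rw [← smul_sub, real_inner_smul_right]
    exact mul_nonneg hγ.le (hA.1 x y a b ha hb)
  · intro x u h
    have : γ⁻¹ • u ∈ A x := by
      apply hA.2
      intro y v hv
      have h2 := h y (γ • v) ⟨v, hv, rfl⟩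
      have : 0 ≤ γ⁻¹ * ⟪x - y, u - γ • v⟫ := mul_nonneg (by positivity) h2
      rwa [← real_inner_smul_right, smul_sub, smul_smul, inv_mul_cancel₀ hγ.ne', one_smul] at this
    exact ⟨γ⁻¹ • u, this, by simp [smul_smul, mul_inv_cancel₀ hγ.ne']⟩

lemma triple_max {A B C : H → Set H} (hA : IsMaxMonotoneOp A) (hB : IsMaxMonotoneOp B)
    (hC : IsMaxMonotoneOp C) {a b c pa pb pc : H}
    (h : ∀ a' pa' b' pb' c' pc', pa' ∈ A a' → pb' ∈ B b' → pc' ∈ C c' →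
      0 ≤ ⟪a - a', pa - pa'⟫ + ⟪b - b', pb - pb'⟫ + ⟪c - c', pc - pc'⟫) :
    pa ∈ A a ∧ pb ∈ B b ∧ pc ∈ C c := by
  have two : ∀ (A B : H → Set H), IsMaxMonotoneOp A → IsMaxMonotoneOp B →
      ∀ (a b pa pb : H), (∀ a' pa' b' pb', pa' ∈ A a' → pb' ∈ B b' →
        0 ≤ ⟪a - a', pa - pa'⟫ + ⟪b - b', pb - pb'⟫) → pa ∈ A a ∧ pb ∈ B b := by
    intro A B hA hB a b pa pb h
    have hpa : pa ∈ A a := by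
      apply hA.2
      intro a' pa' hpa'
      by_contra hneg
      push_neg at hneg
      have hpb : pb ∈ B b := by
        apply hB.2
        intro b' pb' hpb'
        have := h a' pa' b' pb' hpa' hpb'
        linarith
      have := h a' pa' b pb hpa' hpb
      simp only [sub_self, inner_zero_right] at this
      linarith
    refine ⟨hpa, hB.2 _ _ ?_⟩
    intro b' pb' hpb'
    have := h a pa b' pb' hpa hpb'
    simp only [sub_self, inner_zero_right] at this
    linarith
  have hpc : pc ∈ C c := by
    apply hC.2
    intro c' pc' hpc'
    by_contra hneg
    push_neg at hneg
    have h2 := two A B hA hB a b pa pb (by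
      intro a' pa' b' pb' hpa' hpb'
      have := h a' pa' b' pb' c' pc' hpa' hpb' hpc'
      linarith)
    have := h a pa b pb c' pc' h2.1 h2.2 hpc'
    simp only [sub_self, inner_zero_right] at this
    linarith
  have h2 := two A B hA hB a b pa pb (by
    intro a' pa' b' pb' hpa' hpb'
    have := h a' pa' b' pb' c pc hpa' hpb' hpc
    simp only [sub_self, inner_zero_right] at this
    linarith)
  exact ⟨h2.1, h2.2, hpc⟩

lemma ultrafilter_limit_of_bounded (U : Ultrafilter ℕ) (f : ℕ → ℝ) (M : ℝ)
    (hM : ∀ k, |f k| ≤ M) : ∃ L, Tendsto f U (𝓝 L) := by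
  have h1 : ↑(U.map f) ≤ 𝓟 (Set.Icc (-M) M) := by
    rw [le_principal_iff]
    have : ∀ k, f k ∈ Set.Icc (-M) M := fun k => abs_le.mp (hM k)
    exact Filter.mem_map.mpr (by exact Filter.univ_mem' this)
  obtain ⟨L, _, hL⟩ := isCompact_Icc.ultrafilter_le_nhds (U.map f) h1
  exact ⟨L, hL⟩

lemma exists_weak_limit_ultrafilter [CompleteSpace H] (U : Ultrafilter ℕ) (s : ℕ → H)
    (M : ℝ) (hM : ∀ k, ‖s k‖ ≤ M) :
    ∃ l : H, ∀ z : H, Tendsto (fun k => ⟪s k, z⟫) U (𝓝 ⟪l, z⟫) := by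
  have key : ∀ z : H, ∃ L, Tendsto (fun k => ⟪s k, z⟫) U (𝓝 L) := by
    intro z
    apply ultrafilter_limit_of_bounded U _ (M * ‖z‖)
    intro k
    calc |⟪s k, z⟫| ≤ ‖s k‖ * ‖z‖ := abs_real_inner_le_norm _ _
      _ ≤ M * ‖z‖ := mul_le_mul_of_nonneg_right (hM k) (norm_nonneg _)
  choose L hL using key
  have hadd : ∀ z z', L (z + z') = L z + L z' := by
    intro z z'
    refine tendsto_nhds_unique ?_ ((hL z).add (hL z'))
    simpa [inner_add_right] using hL (z + z')
  have hsmul : ∀ (c : ℝ) z, L (c • z) = c * L z := by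
    intro c z
    refine tendsto_nhds_unique ?_ ((hL z).const_mul c)
    simpa [real_inner_smul_right] using hL (c • z)
  have hbound : ∀ z, |L z| ≤ M * ‖z‖ := by
    intro z
    have h1 : Tendsto (fun k => |⟪s k, z⟫|) U (𝓝 |L z|) := (hL z).abs
    refine le_of_tendsto h1 (Filter.Eventually.of_forall fun k => ?_)
    calc |⟪s k, z⟫| ≤ ‖s k‖ * ‖z‖ := abs_real_inner_le_norm _ _
      _ ≤ M * ‖z‖ := mul_le_mul_of_nonneg_right (hM k) (norm_nonneg _)
  let f : H →L[ℝ] ℝ := LinearMap.mkContinuous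
    { toFun := L, map_add' := hadd, map_smul' := hsmul } M
    (fun z => by simpa [Real.norm_eq_abs] using hbound z)
  refine ⟨(InnerProductSpace.toDual ℝ H).symm f, fun z => ?_⟩
  have : ⟪(InnerProductSpace.toDual ℝ H).symm f, z⟫ = f z :=
    InnerProductSpace.toDual_symm_apply
  rw [this]
  exact hL z

lemma le_of_sq_le_mul {a b : ℝ} (ha : 0 ≤ a) (hb : 0 ≤ b) (h : a^2 ≤ a * b) : a ≤ b := by
  rcases eq_or_lt_of_le ha with h0 | h0
  · linarith
  · nlinarith

lemma norm_le_sqrt_of_sq_le {a : ℝ} (v : H) (h : ‖v‖^2 ≤ a) : ‖v‖ ≤ Real.sqrt a := by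
  rw [← Real.sqrt_sq (norm_nonneg v)]
  exact Real.sqrt_le_sqrt h

end Helpers

set_option maxHeartbeats 1600000 in
/-- Ryu splitting, weak convergence: for `λ ∈ (0,1)`, `(x_k, y_k)` converges weakly to a point
`(x, y)` and `(u_k), (v_k), (w_k)` converge weakly to a common point `u` satisfying
`x − u ∈ γA(u)`, `y ∈ γB(u)` and `u − x − y ∈ γC(u)`; in particular `0 ∈ (A+B+C)(u)`. -/
theorem ryu_splitting_weak_convergence {H : Type*} [NormedAddCommGroup H]
    [InnerProductSpace ℝ H] [CompleteSpace H]
    (A B C : H → Set H)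
    (hA : IsMaxMonotoneOp A) (hB : IsMaxMonotoneOp B) (hC : IsMaxMonotoneOp C)
    (hzer : ∃ u₀ : H, (0 : H) ∈ {s : H | ∃ a ∈ A u₀, ∃ b ∈ B u₀, ∃ c ∈ C u₀, s = a + b + c})
    (γ lam : ℝ) (hγ : 0 < γ) (hlam : 0 < lam) (hlam' : lam < 1)
    (x y u v w : ℕ → H)
    (hu : ∀ k : ℕ, x k - u k ∈ γ • A (u k))
    (hv : ∀ k : ℕ, (u k + y k) - v k ∈ γ • B (v k))
    (hw : ∀ k : ℕ, (u k - x k + v k - y k) - w k ∈ γ • C (w k))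
    (hx : ∀ k : ℕ, x (k + 1) = x k + lam • (w k - u k))
    (hy : ∀ k : ℕ, y (k + 1) = y k + lam • (w k - v k)) :
    ∃ xl yl ul : H,
      (∀ z : H, Tendsto (fun k => ⟪x k, z⟫) atTop (𝓝 ⟪xl, z⟫)) ∧
      (∀ z : H, Tendsto (fun k => ⟪y k, z⟫) atTop (𝓝 ⟪yl, z⟫)) ∧
      (∀ z : H, Tendsto (fun k => ⟪u k, z⟫) atTop (𝓝 ⟪ul, z⟫)) ∧
      (∀ z : H, Tendsto (fun k => ⟪v k, z⟫) atTop (𝓝 ⟪ul, z⟫)) ∧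
      (∀ z : H, Tendsto (fun k => ⟪w k, z⟫) atTop (𝓝 ⟪ul, z⟫)) ∧
      xl - ul ∈ γ • A ul ∧ yl ∈ γ • B ul ∧ ul - xl - yl ∈ γ • C ul ∧
      (0 : H) ∈ {s : H | ∃ a ∈ A ul, ∃ b ∈ B ul, ∃ c ∈ C ul, s = a + b + c} := by
  obtain ⟨u₀, a₀, ha₀, b₀, hb₀, c₀, hc₀, h0⟩ := hzer
  have hA' := smul_isMaxMonotoneOp hA hγ
  have hB' := smul_isMaxMonotoneOp hB hγ
  have hC' := smul_isMaxMonotoneOp hC hγ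
  set p : ℕ → H := fun k => u k - w k with hpdef
  set q : ℕ → H := fun k => v k - w k with hqdef
  -- master monotonicity inequality
  have master : ∀ (k : ℕ) (a' pa' b' pb' c' pc' : H), pa' ∈ γ • A a' → pb' ∈ γ • B b' →
      pc' ∈ γ • C c' →
      0 ≤ ⟪u k - a', (x k - u k) - pa'⟫ + ⟪v k - b', ((u k + y k) - v k) - pb'⟫
        + ⟪w k - c', ((u k - x k + v k - y k) - w k) - pc'⟫ := by
    intro k a' pa' b' pb' c' pc' h1 h2 h3
    have i1 := hA'.1 (u k) a' _ _ (hu k) h1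
    have i2 := hB'.1 (v k) b' _ _ (hv k) h2
    have i3 := hC'.1 (w k) c' _ _ (hw k) h3
    linarith
  -- Fejér inequality w.r.t. any "fixed point" triple
  have fejer : ∀ xs ys zs : H, xs - zs ∈ γ • A zs → ys ∈ γ • B zs →
      zs - xs - ys ∈ γ • C zs → ∀ k,
      ‖x (k+1) - xs‖^2 + ‖y (k+1) - ys‖^2
        ≤ ‖x k - xs‖^2 + ‖y k - ys‖^2 - (lam*(1-lam)) * (‖p k‖^2 + ‖q k‖^2) := by
    intro xs ys zs h1 h2 h3 k
    have hm := master k zs (xs - zs) zs ys zs (zs - xs - ys) h1 h2 h3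
    have hid : ⟪u k - zs, (x k - u k) - (xs - zs)⟫ + ⟪v k - zs, ((u k + y k) - v k) - ys⟫
        + ⟪w k - zs, ((u k - x k + v k - y k) - w k) - (zs - xs - ys)⟫
        = ⟪x k - xs, p k⟫ + ⟪y k - ys, q k⟫
          - (‖p k‖^2 + ‖q k‖^2 + ‖p k - q k‖^2)/2 := by
      simp only [hpdef, hqdef, ← real_inner_self_eq_norm_sq, inner_sub_left, inner_sub_right,
        inner_add_left, inner_add_right]
      ring_nf
      simp only [real_inner_comm]
      ring
    rw [hid] at hm
    have hx1 : x (k+1) - xs = (x k - xs) - lam • p k := by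
      rw [hx k, hpdef]; rw [smul_sub, smul_sub]; abel
    have hy1 : y (k+1) - ys = (y k - ys) - lam • q k := by
      rw [hy k, hqdef]; rw [smul_sub, smul_sub]; abel
    have e1 : ‖x (k+1) - xs‖^2
        = ‖x k - xs‖^2 - 2*(lam*⟪x k - xs, p k⟫) + lam^2*‖p k‖^2 := by
      rw [hx1, norm_sub_sq_real, real_inner_smul_right, norm_smul]
      simp [mul_pow, sq_abs]
      try ring
    have e2 : ‖y (k+1) - ys‖^2
        = ‖y k - ys‖^2 - 2*(lam*⟪y k - ys, q k⟫) + lam^2*‖q k‖^2 := by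
      rw [hy1, norm_sub_sq_real, real_inner_smul_right, norm_smul]
      simp [mul_pow, sq_abs]
      try ring
    have hpq : 0 ≤ ‖p k - q k‖^2 := sq_nonneg _
    have key : (‖p k‖^2 + ‖q k‖^2)/2 ≤ ⟪x k - xs, p k⟫ + ⟪y k - ys, q k⟫ := by linarith
    have key2 : lam * ((‖p k‖^2 + ‖q k‖^2)/2)
        ≤ lam * (⟪x k - xs, p k⟫ + ⟪y k - ys, q k⟫) :=
      mul_le_mul_of_nonneg_left key hlam.le
    nlinarith [key2, e1, e2]
  -- the specific fixed point from hzer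
  set xs₀ : H := u₀ + γ • a₀ with hxs₀
  set ys₀ : H := γ • b₀ with hys₀
  have hf1 : xs₀ - u₀ ∈ γ • A u₀ := ⟨a₀, ha₀, by rw [hxs₀]; abel⟩
  have hf2 : ys₀ ∈ γ • B u₀ := ⟨b₀, hb₀, rfl⟩
  have hf3 : u₀ - xs₀ - ys₀ ∈ γ • C u₀ := by
    refine ⟨c₀, hc₀, ?_⟩
    have hc : c₀ = -a₀ - b₀ := by
      linear_combination (norm := module) -h0
    rw [hc, hxs₀, hys₀]
    module
  -- Fejér monotonicity for the specific fixed point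
  have hfe := fejer xs₀ ys₀ u₀ hf1 hf2 hf3
  have hcl : 0 < lam * (1 - lam) := by nlinarith
  have hpqnn : ∀ k, 0 ≤ ‖p k‖^2 + ‖q k‖^2 := fun k => by positivity
  have hDanti : ∀ k, ‖x (k+1) - xs₀‖^2 + ‖y (k+1) - ys₀‖^2
      ≤ ‖x k - xs₀‖^2 + ‖y k - ys₀‖^2 := by
    intro k
    have h1 := hfe k
    have h2 : 0 ≤ lam * (1 - lam) * (‖p k‖^2 + ‖q k‖^2) := mul_nonneg hcl.le (hpqnn k)
    linarith
  have hDanti' : Antitone (fun k => ‖x k - xs₀‖^2 + ‖y k - ys₀‖^2) :=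
    antitone_nat_of_succ_le hDanti
  have hDk0 : ∀ k, ‖x k - xs₀‖^2 + ‖y k - ys₀‖^2 ≤ ‖x 0 - xs₀‖^2 + ‖y 0 - ys₀‖^2 :=
    fun k => hDanti' (Nat.zero_le k)
  have hDlim : Tendsto (fun k => ‖x k - xs₀‖^2 + ‖y k - ys₀‖^2) atTop
      (𝓝 (⨅ k, ‖x k - xs₀‖^2 + ‖y k - ys₀‖^2)) :=
    tendsto_atTop_ciInf hDanti' ⟨0, by rintro _ ⟨k, rfl⟩; positivity⟩
  have hdiff0 : Tendsto (fun k => (‖x k - xs₀‖^2 + ‖y k - ys₀‖^2)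
      - (‖x (k+1) - xs₀‖^2 + ‖y (k+1) - ys₀‖^2)) atTop (𝓝 0) := by
    have h2 := hDlim.comp (tendsto_add_atTop_nat 1)
    simpa using hDlim.sub h2
  have hPQ0 : Tendsto (fun k => ‖p k‖^2 + ‖q k‖^2) atTop (𝓝 0) := by
    have hle : ∀ k, ‖p k‖^2 + ‖q k‖^2 ≤ (lam * (1-lam))⁻¹ *
        ((‖x k - xs₀‖^2 + ‖y k - ys₀‖^2)
          - (‖x (k+1) - xs₀‖^2 + ‖y (k+1) - ys₀‖^2)) := by
      intro k
      rw [le_inv_mul_iff₀ hcl]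
      have := hfe k
      linarith
    have h2 : Tendsto (fun k => (lam * (1-lam))⁻¹ *
        ((‖x k - xs₀‖^2 + ‖y k - ys₀‖^2)
          - (‖x (k+1) - xs₀‖^2 + ‖y (k+1) - ys₀‖^2))) atTop (𝓝 0) := by
      simpa using hdiff0.const_mul (lam * (1-lam))⁻¹
    exact tendsto_of_tendsto_of_tendsto_of_le_of_le tendsto_const_nhds h2 hpqnn hle
  have hnp0 : Tendsto (fun k => ‖p k‖) atTop (𝓝 0) := by
    have h1 : Tendsto (fun k => ‖p k‖^2) atTop (𝓝 0) :=
      tendsto_of_tendsto_of_tendsto_of_le_of_le tendsto_const_nhds hPQ0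
        (fun k => sq_nonneg _) (fun k => by nlinarith [sq_nonneg (‖q k‖)])
    have h2 := (Real.continuous_sqrt.tendsto 0).comp h1
    simpa [Function.comp_def, Real.sqrt_sq (norm_nonneg _)] using h2
  have hnq0 : Tendsto (fun k => ‖q k‖) atTop (𝓝 0) := by
    have h1 : Tendsto (fun k => ‖q k‖^2) atTop (𝓝 0) :=
      tendsto_of_tendsto_of_tendsto_of_le_of_le tendsto_const_nhds hPQ0
        (fun k => sq_nonneg _) (fun k => by nlinarith [sq_nonneg (‖p k‖)])
    have h2 := (Real.continuous_sqrt.tendsto 0).comp h1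
    simpa [Function.comp_def, Real.sqrt_sq (norm_nonneg _)] using h2
  -- boundedness
  obtain ⟨R, hRnn, hxR, hyR⟩ : ∃ R : ℝ, 0 ≤ R ∧ (∀ k, ‖x k - xs₀‖ ≤ R) ∧
      (∀ k, ‖y k - ys₀‖ ≤ R) := by
    refine ⟨Real.sqrt (‖x 0 - xs₀‖^2 + ‖y 0 - ys₀‖^2), Real.sqrt_nonneg _, ?_, ?_⟩ <;>
      intro k <;> apply norm_le_sqrt_of_sq_le
    · have h2 := hDk0 k
      have h3 := sq_nonneg (‖y k - ys₀‖)
      linarith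
    · have h2 := hDk0 k
      have h3 := sq_nonneg (‖x k - xs₀‖)
      linarith
  obtain ⟨R', hR'nn, hqR'⟩ : ∃ R' : ℝ, 0 ≤ R' ∧ ∀ k, ‖q k‖ ≤ R' := by
    refine ⟨Real.sqrt ((lam * (1-lam))⁻¹ * (‖x 0 - xs₀‖^2 + ‖y 0 - ys₀‖^2)),
      Real.sqrt_nonneg _, fun k => ?_⟩
    apply norm_le_sqrt_of_sq_le
    have t0 : 0 ≤ ‖x (k+1) - xs₀‖^2 + ‖y (k+1) - ys₀‖^2 := by positivity
    have t1 : lam*(1-lam)*(‖p k‖^2+‖q k‖^2) ≤ ‖x 0 - xs₀‖^2 + ‖y 0 - ys₀‖^2 := by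
      have h1 := hfe k
      have h2 := hDk0 k
      linarith
    have t2 : lam*(1-lam)*‖q k‖^2 ≤ lam*(1-lam)*(‖p k‖^2+‖q k‖^2) :=
      mul_le_mul_of_nonneg_left (by linarith [sq_nonneg (‖p k‖)]) hcl.le
    rw [le_inv_mul_iff₀ hcl]
    linarith
  have huR : ∀ k, ‖u k - u₀‖ ≤ R := by
    intro k
    have i1 := hA'.1 (u k) u₀ _ _ (hu k) hf1
    have hid : ⟪u k - u₀, (x k - u k) - (xs₀ - u₀)⟫
        = ⟪u k - u₀, x k - xs₀⟫ - ‖u k - u₀‖^2 := by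
      simp only [← real_inner_self_eq_norm_sq, inner_sub_left, inner_sub_right]
      ring_nf
      all_goals simp only [real_inner_comm]
      all_goals ring
    rw [hid] at i1
    have h2a : ‖u k - u₀‖^2 ≤ ⟪u k - u₀, x k - xs₀⟫ := by linarith
    have h2 : ‖u k - u₀‖^2 ≤ ‖u k - u₀‖ * ‖x k - xs₀‖ :=
      h2a.trans (real_inner_le_norm _ _)
    exact (le_of_sq_le_mul (norm_nonneg _) (norm_nonneg _) h2).trans (hxR k)
  have hvR : ∀ k, ‖v k - u₀‖ ≤ 2*R := by
    intro k
    have i2 := hB'.1 (v k) u₀ _ _ (hv k) hf2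
    have hid : ⟪v k - u₀, ((u k + y k) - v k) - ys₀⟫
        = ⟪v k - u₀, (u k - u₀) + (y k - ys₀)⟫ - ‖v k - u₀‖^2 := by
      simp only [← real_inner_self_eq_norm_sq, inner_sub_left, inner_sub_right,
        inner_add_left, inner_add_right]
      ring_nf
      all_goals simp only [real_inner_comm]
      all_goals ring
    rw [hid] at i2
    have h2a : ‖v k - u₀‖^2 ≤ ⟪v k - u₀, (u k - u₀) + (y k - ys₀)⟫ := by linarith
    have h2 : ‖v k - u₀‖^2 ≤ ‖v k - u₀‖ * (‖u k - u₀‖ + ‖y k - ys₀‖) :=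
      h2a.trans ((real_inner_le_norm _ _).trans
        (mul_le_mul_of_nonneg_left (norm_add_le _ _) (norm_nonneg _)))
    have h3 := le_of_sq_le_mul (norm_nonneg _) (by positivity) h2
    have h4 := huR k
    have h5 := hyR k
    linarith
  have hwR : ∀ k, ‖w k - u₀‖ ≤ 2*R + R' := by
    intro k
    have h1 : w k - u₀ = (v k - u₀) - q k := by
      show w k - u₀ = (v k - u₀) - (v k - w k); abel
    rw [h1]
    calc ‖(v k - u₀) - q k‖ ≤ ‖v k - u₀‖ + ‖q k‖ := norm_sub_le _ _
      _ ≤ 2*R + R' := add_le_add (hvR k) (hqR' k)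
  obtain ⟨M, hMnn, hMx, hMy, hMu, hMv, hMw⟩ :
      ∃ M : ℝ, 0 ≤ M ∧ (∀ k, ‖x k‖ ≤ M) ∧ (∀ k, ‖y k‖ ≤ M) ∧ (∀ k, ‖u k‖ ≤ M) ∧
        (∀ k, ‖v k‖ ≤ M) ∧ (∀ k, ‖w k‖ ≤ M) := by
    have hb : ∀ (s : H) (t : H) (Rr : ℝ), ‖s - t‖ ≤ Rr → ‖s‖ ≤ ‖t‖ + Rr := by
      intro s t Rr h
      calc ‖s‖ = ‖t + (s - t)‖ := by congr 1; abel
        _ ≤ ‖t‖ + ‖s - t‖ := norm_add_le _ _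
        _ ≤ ‖t‖ + Rr := by linarith
    have n1 : (0:ℝ) ≤ ‖xs₀‖ := norm_nonneg _
    have n2 : (0:ℝ) ≤ ‖ys₀‖ := norm_nonneg _
    have n3 : (0:ℝ) ≤ ‖u₀‖ := norm_nonneg _
    refine ⟨‖xs₀‖ + ‖ys₀‖ + ‖u₀‖ + 2*R + (R + R'), by positivity, fun k => ?_, fun k => ?_,
      fun k => ?_, fun k => ?_, fun k => ?_⟩
    · have := hb _ _ _ (hxR k); linarith
    · have := hb _ _ _ (hyR k); linarith
    · have := hb _ _ _ (huR k); linarith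
    · have := hb _ _ _ (hvR k); linarith
    · have := hb _ _ _ (hwR k); linarith
  -- per-ultrafilter weak limits satisfying the inclusions
  have mainU : ∀ U : Ultrafilter ℕ, (↑U : Filter ℕ) ≤ atTop → ∃ xb yb ub : H,
      (∀ z, Tendsto (fun k => ⟪x k, z⟫) ↑U (𝓝 ⟪xb, z⟫)) ∧
      (∀ z, Tendsto (fun k => ⟪y k, z⟫) ↑U (𝓝 ⟪yb, z⟫)) ∧
      (∀ z, Tendsto (fun k => ⟪u k, z⟫) ↑U (𝓝 ⟪ub, z⟫)) ∧
      (∀ z, Tendsto (fun k => ⟪v k, z⟫) ↑U (𝓝 ⟪ub, z⟫)) ∧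
      (∀ z, Tendsto (fun k => ⟪w k, z⟫) ↑U (𝓝 ⟪ub, z⟫)) ∧
      xb - ub ∈ γ • A ub ∧ yb ∈ γ • B ub ∧ ub - xb - yb ∈ γ • C ub := by
    intro U hU
    obtain ⟨xb, hxb⟩ := exists_weak_limit_ultrafilter U x M hMx
    obtain ⟨yb, hyb⟩ := exists_weak_limit_ultrafilter U y M hMy
    obtain ⟨ub, hub⟩ := exists_weak_limit_ultrafilter U w M hMw
    have hpz : ∀ z : H, Tendsto (fun k => ⟪p k, z⟫) (↑U : Filter ℕ) (𝓝 0) := by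
      intro z
      have h1 : Tendsto (fun k => ⟪p k, z⟫) atTop (𝓝 0) := by
        apply squeeze_zero_norm (a := fun k => ‖p k‖ * ‖z‖)
        · intro k
          simpa [Real.norm_eq_abs] using abs_real_inner_le_norm (p k) z
        · simpa using hnp0.mul_const ‖z‖
      exact h1.mono_left hU
    have hqz : ∀ z : H, Tendsto (fun k => ⟪q k, z⟫) (↑U : Filter ℕ) (𝓝 0) := by
      intro z
      have h1 : Tendsto (fun k => ⟪q k, z⟫) atTop (𝓝 0) := by
        apply squeeze_zero_norm (a := fun k => ‖q k‖ * ‖z‖)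
        · intro k
          simpa [Real.norm_eq_abs] using abs_real_inner_le_norm (q k) z
        · simpa using hnq0.mul_const ‖z‖
      exact h1.mono_left hU
    have huz : ∀ z, Tendsto (fun k => ⟪u k, z⟫) (↑U : Filter ℕ) (𝓝 ⟪ub, z⟫) := by
      intro z
      have h1 : ∀ k, ⟪u k, z⟫ = ⟪w k, z⟫ + ⟪p k, z⟫ := by
        intro k
        rw [← inner_add_left]
        congr 1
        show u k = w k + (u k - w k)
        abel
      simp only [h1]
      simpa using (hub z).add (hpz z)
    have hvz : ∀ z, Tendsto (fun k => ⟪v k, z⟫) (↑U : Filter ℕ) (𝓝 ⟪ub, z⟫) := by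
      intro z
      have h1 : ∀ k, ⟪v k, z⟫ = ⟪w k, z⟫ + ⟪q k, z⟫ := by
        intro k
        rw [← inner_add_left]
        congr 1
        show v k = w k + (v k - w k)
        abel
      simp only [h1]
      simpa using (hub z).add (hqz z)
    have trip : (xb - ub) ∈ (fun t => γ • A t) ub ∧ yb ∈ (fun t => γ • B t) ub ∧
        (ub - xb - yb) ∈ (fun t => γ • C t) ub := by
      apply triple_max hA' hB' hC'
      intro a' pa' b' pb' c' pc' h1 h2 h3
      -- the expression L∞
      set Linf : ℝ := ⟪xb, c' - a'⟫ + ⟪yb, c' - b'⟫ + ⟪ub, a' - c' - (pa' + pb' + pc')⟫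
        + (⟪a', pa'⟫ + ⟪b', pb'⟫ + ⟪c', pc'⟫) with hLinf
      have hSL : ∀ k, (⟪u k - a', (x k - u k) - pa'⟫ + ⟪v k - b', ((u k + y k) - v k) - pb'⟫
          + ⟪w k - c', ((u k - x k + v k - y k) - w k) - pc'⟫)
          = (⟪x k, c' - a'⟫ + ⟪y k, c' - b'⟫ + ⟪w k, a' - c' - (pa' + pb' + pc')⟫
             + (⟪a', pa'⟫ + ⟪b', pb'⟫ + ⟪c', pc'⟫))
            + ⟪p k, (x k - p k + q k) + (a' - b' - c' - pa')⟫
            + ⟪q k, (y k - q k) + (b' - c' - pb')⟫ := by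
        intro k
        simp only [hpdef, hqdef, inner_sub_left, inner_sub_right, inner_add_left,
          inner_add_right]
        ring_nf
        all_goals simp only [real_inner_comm]
        all_goals ring
      have hpb2M : ∀ k, ‖p k‖ ≤ 2*M := by
        intro k
        show ‖u k - w k‖ ≤ 2*M
        calc ‖u k - w k‖ ≤ ‖u k‖ + ‖w k‖ := norm_sub_le _ _
          _ ≤ 2*M := by have := hMu k; have := hMw k; linarith
      have hqb2M : ∀ k, ‖q k‖ ≤ 2*M := by
        intro k
        show ‖v k - w k‖ ≤ 2*M
        calc ‖v k - w k‖ ≤ ‖v k‖ + ‖w k‖ := norm_sub_le _ _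
          _ ≤ 2*M := by have := hMv k; have := hMw k; linarith
      have hE1 : Tendsto (fun k => ⟪p k, (x k - p k + q k) + (a' - b' - c' - pa')⟫)
          (↑U : Filter ℕ) (𝓝 0) := by
        have h1 : Tendsto (fun k => ⟪p k, (x k - p k + q k) + (a' - b' - c' - pa')⟫)
            atTop (𝓝 0) := by
          apply squeeze_zero_norm
            (a := fun k => ‖p k‖ * (5*M + ‖a' - b' - c' - pa'‖))
          · intro k
            have hb1 : ‖(x k - p k + q k) + (a' - b' - c' - pa')‖
                ≤ 5*M + ‖a' - b' - c' - pa'‖ := by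
              have t1 : ‖x k - p k + q k‖ ≤ ‖x k‖ + ‖p k‖ + ‖q k‖ := by
                calc ‖x k - p k + q k‖ ≤ ‖x k - p k‖ + ‖q k‖ := norm_add_le _ _
                  _ ≤ ‖x k‖ + ‖p k‖ + ‖q k‖ := by
                      have := norm_sub_le (x k) (p k); linarith
              have := hMx k
              have := hpb2M k
              have := hqb2M k
              calc ‖(x k - p k + q k) + (a' - b' - c' - pa')‖
                  ≤ ‖x k - p k + q k‖ + ‖a' - b' - c' - pa'‖ := norm_add_le _ _
                _ ≤ 5*M + ‖a' - b' - c' - pa'‖ := by linarith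
            calc ‖⟪p k, (x k - p k + q k) + (a' - b' - c' - pa')⟫‖
                ≤ ‖p k‖ * ‖(x k - p k + q k) + (a' - b' - c' - pa')‖ := by
                  simpa [Real.norm_eq_abs] using abs_real_inner_le_norm _ _
              _ ≤ ‖p k‖ * (5*M + ‖a' - b' - c' - pa'‖) :=
                  mul_le_mul_of_nonneg_left hb1 (norm_nonneg _)
          · simpa using hnp0.mul_const (5*M + ‖a' - b' - c' - pa'‖)
        exact h1.mono_left hU
      have hE2 : Tendsto (fun k => ⟪q k, (y k - q k) + (b' - c' - pb')⟫)
          (↑U : Filter ℕ) (𝓝 0) := by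
        have h1 : Tendsto (fun k => ⟪q k, (y k - q k) + (b' - c' - pb')⟫)
            atTop (𝓝 0) := by
          apply squeeze_zero_norm (a := fun k => ‖q k‖ * (3*M + ‖b' - c' - pb'‖))
          · intro k
            have hb1 : ‖(y k - q k) + (b' - c' - pb')‖ ≤ 3*M + ‖b' - c' - pb'‖ := by
              have t1 : ‖y k - q k‖ ≤ ‖y k‖ + ‖q k‖ := norm_sub_le _ _
              have := hMy k
              have := hqb2M k
              calc ‖(y k - q k) + (b' - c' - pb')‖
                  ≤ ‖y k - q k‖ + ‖b' - c' - pb'‖ := norm_add_le _ _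
                _ ≤ 3*M + ‖b' - c' - pb'‖ := by linarith
            calc ‖⟪q k, (y k - q k) + (b' - c' - pb')⟫‖
                ≤ ‖q k‖ * ‖(y k - q k) + (b' - c' - pb')‖ := by
                  simpa [Real.norm_eq_abs] using abs_real_inner_le_norm _ _
              _ ≤ ‖q k‖ * (3*M + ‖b' - c' - pb'‖) :=
                  mul_le_mul_of_nonneg_left hb1 (norm_nonneg _)
          · simpa using hnq0.mul_const (3*M + ‖b' - c' - pb'‖)
        exact h1.mono_left hU
      have hL : Tendsto (fun k => ⟪x k, c' - a'⟫ + ⟪y k, c' - b'⟫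
          + ⟪w k, a' - c' - (pa' + pb' + pc')⟫ + (⟪a', pa'⟫ + ⟪b', pb'⟫ + ⟪c', pc'⟫))
          (↑U : Filter ℕ) (𝓝 Linf) := by
        rw [hLinf]
        exact (((hxb _).add (hyb _)).add (hub _)).add tendsto_const_nhds
      have hS : Tendsto (fun k => ⟪u k - a', (x k - u k) - pa'⟫
          + ⟪v k - b', ((u k + y k) - v k) - pb'⟫
          + ⟪w k - c', ((u k - x k + v k - y k) - w k) - pc'⟫) (↑U : Filter ℕ) (𝓝 Linf) := by
        simp only [hSL]
        simpa using (hL.add hE1).add hE2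
      have hT0 : 0 ≤ Linf :=
        ge_of_tendsto hS (Filter.Eventually.of_forall fun k =>
          master k a' pa' b' pb' c' pc' h1 h2 h3)
      have hfin : ⟪ub - a', (xb - ub) - pa'⟫ + ⟪ub - b', yb - pb'⟫
          + ⟪ub - c', (ub - xb - yb) - pc'⟫ = Linf := by
        rw [hLinf]
        simp only [inner_sub_left, inner_sub_right, inner_add_left, inner_add_right]
        ring_nf
        all_goals simp only [real_inner_comm]
        all_goals ring
      linarith
    exact ⟨xb, yb, ub, hxb, hyb, huz, hvz, hub, trip.1, trip.2.1, trip.2.2⟩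
  -- uniqueness of weak limits (Opial argument)
  have uniq : ∀ (V₁ V₂ : Ultrafilter ℕ), (↑V₁ : Filter ℕ) ≤ atTop → (↑V₂ : Filter ℕ) ≤ atTop →
      ∀ xb₁ yb₁ ub₁ xb₂ yb₂ ub₂ : H,
      (∀ z, Tendsto (fun k => ⟪x k, z⟫) ↑V₁ (𝓝 ⟪xb₁, z⟫)) →
      (∀ z, Tendsto (fun k => ⟪y k, z⟫) ↑V₁ (𝓝 ⟪yb₁, z⟫)) →
      (∀ z, Tendsto (fun k => ⟪x k, z⟫) ↑V₂ (𝓝 ⟪xb₂, z⟫)) →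
      (∀ z, Tendsto (fun k => ⟪y k, z⟫) ↑V₂ (𝓝 ⟪yb₂, z⟫)) →
      xb₁ - ub₁ ∈ γ • A ub₁ → yb₁ ∈ γ • B ub₁ → ub₁ - xb₁ - yb₁ ∈ γ • C ub₁ →
      xb₂ - ub₂ ∈ γ • A ub₂ → yb₂ ∈ γ • B ub₂ → ub₂ - xb₂ - yb₂ ∈ γ • C ub₂ →
      xb₁ = xb₂ ∧ yb₁ = yb₂ ∧ ub₁ = ub₂ := by
    intro V₁ V₂ hV₁ hV₂ xb₁ yb₁ ub₁ xb₂ yb₂ ub₂ hx1 hy1 hx2 hy2 i11 i12 i13 i21 i22 i23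
    have hfe1 := fejer xb₁ yb₁ ub₁ i11 i12 i13
    have hfe2 := fejer xb₂ yb₂ ub₂ i21 i22 i23
    have anti1 : Antitone (fun k => ‖x k - xb₁‖^2 + ‖y k - yb₁‖^2) :=
      antitone_nat_of_succ_le (fun k => by
        show ‖x (k+1) - xb₁‖^2 + ‖y (k+1) - yb₁‖^2 ≤ ‖x k - xb₁‖^2 + ‖y k - yb₁‖^2
        have h1 := hfe1 k
        have h2 : 0 ≤ lam*(1-lam)*(‖p k‖^2+‖q k‖^2) := mul_nonneg hcl.le (hpqnn k)
        linarith)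
    have anti2 : Antitone (fun k => ‖x k - xb₂‖^2 + ‖y k - yb₂‖^2) :=
      antitone_nat_of_succ_le (fun k => by
        show ‖x (k+1) - xb₂‖^2 + ‖y (k+1) - yb₂‖^2 ≤ ‖x k - xb₂‖^2 + ‖y k - yb₂‖^2
        have h1 := hfe2 k
        have h2 : 0 ≤ lam*(1-lam)*(‖p k‖^2+‖q k‖^2) := mul_nonneg hcl.le (hpqnn k)
        linarith)
    have lim1 : Tendsto (fun k => ‖x k - xb₁‖^2 + ‖y k - yb₁‖^2) atTop
        (𝓝 (⨅ k, ‖x k - xb₁‖^2 + ‖y k - yb₁‖^2)) :=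
      tendsto_atTop_ciInf anti1 ⟨0, by rintro _ ⟨k, rfl⟩; positivity⟩
    have lim2 : Tendsto (fun k => ‖x k - xb₂‖^2 + ‖y k - yb₂‖^2) atTop
        (𝓝 (⨅ k, ‖x k - xb₂‖^2 + ‖y k - yb₂‖^2)) :=
      tendsto_atTop_ciInf anti2 ⟨0, by rintro _ ⟨k, rfl⟩; positivity⟩
    have hdiff : Tendsto (fun k => (‖x k - xb₁‖^2 + ‖y k - yb₁‖^2)
        - (‖x k - xb₂‖^2 + ‖y k - yb₂‖^2)) atTop
        (𝓝 ((⨅ k, ‖x k - xb₁‖^2 + ‖y k - yb₁‖^2)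
          - (⨅ k, ‖x k - xb₂‖^2 + ‖y k - yb₂‖^2))) := lim1.sub lim2
    have hgid : ∀ k, (‖x k - xb₁‖^2 + ‖y k - yb₁‖^2) - (‖x k - xb₂‖^2 + ‖y k - yb₂‖^2)
        = 2*⟪x k, xb₂ - xb₁⟫ + 2*⟪y k, yb₂ - yb₁⟫
          + (‖xb₁‖^2 - ‖xb₂‖^2 + ‖yb₁‖^2 - ‖yb₂‖^2) := by
      intro k
      simp only [← real_inner_self_eq_norm_sq, inner_sub_left, inner_sub_right]
      ring_nf
      all_goals simp only [real_inner_comm]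
      all_goals ring
    have hlimV1 : Tendsto (fun k => (‖x k - xb₁‖^2 + ‖y k - yb₁‖^2)
        - (‖x k - xb₂‖^2 + ‖y k - yb₂‖^2)) (↑V₁ : Filter ℕ)
        (𝓝 (2*⟪xb₁, xb₂ - xb₁⟫ + 2*⟪yb₁, yb₂ - yb₁⟫
          + (‖xb₁‖^2 - ‖xb₂‖^2 + ‖yb₁‖^2 - ‖yb₂‖^2))) := by
      simp only [hgid]
      exact (((hx1 _).const_mul 2).add ((hy1 _).const_mul 2)).add tendsto_const_nhds
    have hlimV2 : Tendsto (fun k => (‖x k - xb₁‖^2 + ‖y k - yb₁‖^2)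
        - (‖x k - xb₂‖^2 + ‖y k - yb₂‖^2)) (↑V₂ : Filter ℕ)
        (𝓝 (2*⟪xb₂, xb₂ - xb₁⟫ + 2*⟪yb₂, yb₂ - yb₁⟫
          + (‖xb₁‖^2 - ‖xb₂‖^2 + ‖yb₁‖^2 - ‖yb₂‖^2))) := by
      simp only [hgid]
      exact (((hx2 _).const_mul 2).add ((hy2 _).const_mul 2)).add tendsto_const_nhds
    have e1 := tendsto_nhds_unique hlimV1 (hdiff.mono_left hV₁)
    have e2 := tendsto_nhds_unique hlimV2 (hdiff.mono_left hV₂)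
    have h12 := e1.trans e2.symm
    have e3 : ‖xb₂ - xb₁‖^2 + ‖yb₂ - yb₁‖^2 = 0 := by
      simp only [← real_inner_self_eq_norm_sq, inner_sub_left, inner_sub_right] at h12 ⊢
      ring_nf at h12 ⊢
      simp only [real_inner_comm] at h12 ⊢
      linarith
    have hxeq : xb₁ = xb₂ := by
      have h1 : ‖xb₂ - xb₁‖^2 = 0 := by nlinarith [sq_nonneg (‖yb₂ - yb₁‖)]
      have h2 : ‖xb₂ - xb₁‖ = 0 := by
        have := sq_nonneg (‖xb₂ - xb₁‖)
        nlinarith [norm_nonneg (xb₂ - xb₁)]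
      exact (sub_eq_zero.mp (norm_eq_zero.mp h2)).symm
    have hyeq : yb₁ = yb₂ := by
      have h1 : ‖yb₂ - yb₁‖^2 = 0 := by nlinarith [sq_nonneg (‖xb₂ - xb₁‖)]
      have h2 : ‖yb₂ - yb₁‖ = 0 := by nlinarith [norm_nonneg (yb₂ - yb₁)]
      exact (sub_eq_zero.mp (norm_eq_zero.mp h2)).symm
    have hueq : ub₁ = ub₂ := by
      rw [← hxeq] at i21
      have hm := hA'.1 ub₁ ub₂ _ _ i11 i21
      have hid : ⟪ub₁ - ub₂, (xb₁ - ub₁) - (xb₁ - ub₂)⟫ = -‖ub₁ - ub₂‖^2 := by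
        simp only [← real_inner_self_eq_norm_sq, inner_sub_left, inner_sub_right]
        ring_nf
        all_goals simp only [real_inner_comm]
        all_goals ring
      rw [hid] at hm
      have h2 : ‖ub₁ - ub₂‖ = 0 := by
        have := sq_nonneg (‖ub₁ - ub₂‖)
        nlinarith [norm_nonneg (ub₁ - ub₂)]
      exact sub_eq_zero.mp (norm_eq_zero.mp h2)
    exact ⟨hxeq, hyeq, hueq⟩
  -- final assembly
  have hU₀ : ((Ultrafilter.of atTop : Ultrafilter ℕ) : Filter ℕ) ≤ atTop := Ultrafilter.of_le _
  obtain ⟨xb, yb, ub, c1, c2, c3, c4, c5, i1, i2, i3⟩ := mainU (Ultrafilter.of atTop) hU₀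
  have conc : ∀ (V : Ultrafilter ℕ), (↑V : Filter ℕ) ≤ atTop → ∀ z,
      Tendsto (fun k => ⟪x k, z⟫) ↑V (𝓝 ⟪xb, z⟫) ∧
      Tendsto (fun k => ⟪y k, z⟫) ↑V (𝓝 ⟪yb, z⟫) ∧
      Tendsto (fun k => ⟪u k, z⟫) ↑V (𝓝 ⟪ub, z⟫) ∧
      Tendsto (fun k => ⟪v k, z⟫) ↑V (𝓝 ⟪ub, z⟫) ∧
      Tendsto (fun k => ⟪w k, z⟫) ↑V (𝓝 ⟪ub, z⟫) := by
    intro V hV z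
    obtain ⟨xb', yb', ub', d1, d2, d3, d4, d5, j1, j2, j3⟩ := mainU V hV
    obtain ⟨ex, ey, eu⟩ := uniq (Ultrafilter.of atTop) V hU₀ hV xb yb ub xb' yb' ub'
      c1 c2 d1 d2 i1 i2 i3 j1 j2 j3
    rw [ex, ey, eu]
    exact ⟨d1 z, d2 z, d3 z, d4 z, d5 z⟩
  refine ⟨xb, yb, ub, ?_, ?_, ?_, ?_, ?_, i1, i2, i3, ?_⟩
  · intro z
    rw [tendsto_iff_ultrafilter]
    intro V hV
    exact (conc V hV z).1
  · intro z
    rw [tendsto_iff_ultrafilter]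
    intro V hV
    exact (conc V hV z).2.1
  · intro z
    rw [tendsto_iff_ultrafilter]
    intro V hV
    exact (conc V hV z).2.2.1
  · intro z
    rw [tendsto_iff_ultrafilter]
    intro V hV
    exact (conc V hV z).2.2.2.1
  · intro z
    rw [tendsto_iff_ultrafilter]
    intro V hV
    exact (conc V hV z).2.2.2.2
  · obtain ⟨aa, haa, haa2⟩ := Set.mem_smul_set.mp i1
    obtain ⟨bb, hbb, hbb2⟩ := Set.mem_smul_set.mp i2
    obtain ⟨cc, hcc, hcc2⟩ := Set.mem_smul_set.mp i3
    refine ⟨aa, haa, bb, hbb, cc, hcc, ?_⟩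
    have hsum : γ • (aa + bb + cc) = 0 := by
      rw [smul_add, smul_add, haa2, hbb2, hcc2]
      abel
    have hz := (smul_eq_zero.mp hsum).resolve_left hγ.ne'
    exact hz.symm
end

section
/- (Key monotonicity inequality for Ryu splitting.) Let A, B, C be monotone set-valued operators on H and let γ > 0. Suppose x, y, u ∈ H satisfy x − u ∈ γ•A(u), y ∈ γ•B(u) and u − x − y ∈ γ•C(u), and suppose x', y', u', v', w' ∈ H satisfy x' − u' ∈ γ•A(u'), (u' + y') − v' ∈ γ•B(v') and (u' − x' + v' − y') − w' ∈ γ•C(w'). Then 0 ≤ ⟪x − x', w' − u'⟫ − ‖w' − u'‖² + ⟪y − y', w' − v'⟫ − ‖w' − v'‖² + ⟪w' − u', w' − v'⟫. -/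
open scoped RealInnerProductSpace Pointwise

/-- Key monotonicity inequality for Ryu splitting. -/
theorem ryu_key_inequality {H : Type*} [NormedAddCommGroup H]
    [InnerProductSpace ℝ H] [CompleteSpace H]
    (A B C : H → Set H)
    (hA : IsMonotoneOp A) (hB : IsMonotoneOp B) (hC : IsMonotoneOp C)
    (γ : ℝ) (hγ : 0 < γ)
    (x y u : H)
    (hxu : x - u ∈ γ • A u) (hyu : y ∈ γ • B u) (hu : u - x - y ∈ γ • C u)
    (x' y' u' v' w' : H)
    (hx'u' : x' - u' ∈ γ • A u')
    (hv' : (u' + y') - v' ∈ γ • B v')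
    (hw' : (u' - x' + v' - y') - w' ∈ γ • C w') :
    0 ≤ ⟪x - x', w' - u'⟫ - ‖w' - u'‖ ^ 2 + ⟪y - y', w' - v'⟫ - ‖w' - v'‖ ^ 2 +
        ⟪w' - u', w' - v'⟫ := by
  obtain ⟨a, ha, hae⟩ := hxu
  obtain ⟨a', ha', hae'⟩ := hx'u'
  obtain ⟨b, hb, hbe⟩ := hyu
  obtain ⟨b', hb', hbe'⟩ := hv'
  obtain ⟨c, hc, hce⟩ := hu
  obtain ⟨c', hc', hce'⟩ := hw'
  have h1 : (0:ℝ) ≤ ⟪u - u', (x - u) - (x' - u')⟫ := by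
    rw [← hae, ← hae', ← smul_sub, real_inner_smul_right]
    exact mul_nonneg hγ.le (hA u u' a a' ha ha')
  have h2 : (0:ℝ) ≤ ⟪u - v', y - ((u' + y') - v')⟫ := by
    rw [← hbe, ← hbe', ← smul_sub, real_inner_smul_right]
    exact mul_nonneg hγ.le (hB u v' b b' hb hb')
  have h3 : (0:ℝ) ≤ ⟪u - w', (u - x - y) - ((u' - x' + v' - y') - w')⟫ := by
    rw [← hce, ← hce', ← smul_sub, real_inner_smul_right]
    exact mul_nonneg hγ.le (hC u w' c c' hc hc')
  have key : ⟪x - x', w' - u'⟫ - ‖w' - u'‖ ^ 2 + ⟪y - y', w' - v'⟫ - ‖w' - v'‖ ^ 2 +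
      ⟪w' - u', w' - v'⟫ =
      ⟪u - u', (x - u) - (x' - u')⟫ + ⟪u - v', y - ((u' + y') - v')⟫ +
      ⟪u - w', (u - x - y) - ((u' - x' + v' - y') - w')⟫ := by
    rw [← real_inner_self_eq_norm_sq, ← real_inner_self_eq_norm_sq]
    simp only [inner_sub_left, inner_sub_right, inner_add_left, inner_add_right]
    simp only [real_inner_comm u']
    simp only [real_inner_comm v']
    simp only [real_inner_comm w']
    simp only [real_inner_comm x]
    simp only [real_inner_comm y]
    simp only [real_inner_comm u]
    ring
  rw [key]
  linarith
end

section
/- (One-step Fejér-type inequality for Ryu splitting.) Let A, B, C be monotone set-valued operators on H, let γ > 0 and let λ > 0. Suppose x, y, u ∈ H satisfy x − u ∈ γ•A(u), y ∈ γ•B(u) and u − x − y ∈ γ•C(u). Suppose x', y', u', v', w' ∈ H satisfy x' − u' ∈ γ•A(u'), (u' + y') − v' ∈ γ•B(v') and (u' − x' + v' − y') − w' ∈ γ•C(w'), and set x'' := x' + λ(w' − u') and y'' := y' + λ(w' − v'). Then ‖x'' − x‖² + ‖y'' − y‖² + ((1 − λ)/λ)·(‖x'' − x'‖² + ‖y''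 − y'‖²) ≤ ‖x' − x‖² + ‖y' − y‖². -/
open scoped RealInnerProductSpace Pointwise

/-- One-step Fejér-type inequality for Ryu splitting. -/
theorem ryu_fejer_inequality {H : Type*} [NormedAddCommGroup H]
    [InnerProductSpace ℝ H] [CompleteSpace H]
    (A B C : H → Set H)
    (hA : IsMonotoneOp A) (hB : IsMonotoneOp B) (hC : IsMonotoneOp C)
    (γ lam : ℝ) (hγ : 0 < γ) (hlam : 0 < lam)
    (x y u : H)
    (hxu : x - u ∈ γ • A u) (hyu : y ∈ γ • B u) (hu : u - x - y ∈ γ • C u)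
    (x' y' u' v' w' x'' y'' : H)
    (hx'u' : x' - u' ∈ γ • A u')
    (hv' : (u' + y') - v' ∈ γ • B v')
    (hw' : (u' - x' + v' - y') - w' ∈ γ • C w')
    (hx'' : x'' = x' + lam • (w' - u'))
    (hy'' : y'' = y' + lam • (w' - v')) :
    ‖x'' - x‖ ^ 2 + ‖y'' - y‖ ^ 2 +
        ((1 - lam) / lam) * (‖x'' - x'‖ ^ 2 + ‖y'' - y'‖ ^ 2) ≤
      ‖x' - x‖ ^ 2 + ‖y' - y‖ ^ 2 := by
  obtain ⟨a, ha, haeq⟩ := hxu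
  obtain ⟨a', ha', ha'eq⟩ := hx'u'
  obtain ⟨b, hb, hbeq⟩ := hyu
  obtain ⟨b', hb', hb'eq⟩ := hv'
  obtain ⟨c, hc, hceq⟩ := hu
  obtain ⟨c', hc', hc'eq⟩ := hw'
  have hMA : 0 ≤ ⟪u - u', (x - u) - (x' - u')⟫ := by
    rw [← haeq, ← ha'eq, ← smul_sub, real_inner_smul_right]
    exact mul_nonneg hγ.le (hA u u' a a' ha ha')
  have hMB : 0 ≤ ⟪u - v', y - ((u' + y') - v')⟫ := by
    rw [← hbeq, ← hb'eq, ← smul_sub, real_inner_smul_right]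
    exact mul_nonneg hγ.le (hB u v' b b' hb hb')
  have hMC : 0 ≤ ⟪u - w', (u - x - y) - ((u' - x' + v' - y') - w')⟫ := by
    rw [← hceq, ← hc'eq, ← smul_sub, real_inner_smul_right]
    exact mul_nonneg hγ.le (hC u w' c c' hc hc')
  have h0 : (0:ℝ) ≤ ⟪u' - v', u' - v'⟫ := real_inner_self_nonneg
  have hkey : 2 * ⟪x' - x, w' - u'⟫ + 2 * ⟪y' - y, w' - v'⟫ +
      ⟪w' - u', w' - u'⟫ + ⟪w' - v', w' - v'⟫ ≤ 0 := by
    simp only [inner_sub_left, inner_sub_right, inner_add_left, inner_add_right]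
      at hMA hMB hMC h0 ⊢
    linarith [real_inner_comm x y, real_inner_comm x u, real_inner_comm x x',
      real_inner_comm x y', real_inner_comm x u', real_inner_comm x v', real_inner_comm x w',
      real_inner_comm y u, real_inner_comm y x', real_inner_comm y y', real_inner_comm y u',
      real_inner_comm y v', real_inner_comm y w', real_inner_comm u x', real_inner_comm u y',
      real_inner_comm u u', real_inner_comm u v', real_inner_comm u w',
      real_inner_comm x' y', real_inner_comm x' u', real_inner_comm x' v',
      real_inner_comm x' w', real_inner_comm y' u', real_inner_comm y' v',
      real_inner_comm y' w', real_inner_comm u' v', real_inner_comm u' w',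
      real_inner_comm v' w']
  have e1 : x'' - x = (x' - x) + lam • (w' - u') := by rw [hx'', add_sub_right_comm]
  have e2 : y'' - y = (y' - y) + lam • (w' - v') := by rw [hy'', add_sub_right_comm]
  have e3 : x'' - x' = lam • (w' - u') := by rw [hx'', add_sub_cancel_left]
  have e4 : y'' - y' = lam • (w' - v') := by rw [hy'', add_sub_cancel_left]
  rw [e1, e2, e3, e4, norm_add_sq_real, norm_add_sq_real, norm_smul, norm_smul,
    real_inner_smul_right, real_inner_smul_right]
  simp only [Real.norm_eq_abs, mul_pow, sq_abs]
  rw [← real_inner_self_eq_norm_sq (w' - u'), ← real_inner_self_eq_norm_sq (w' - v')]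
  have hne : lam ≠ 0 := hlam.ne'
  have hdiv : (1 - lam) / lam * (lam ^ 2 * ⟪w' - u', w' - u'⟫ + lam ^ 2 * ⟪w' - v', w' - v'⟫)
      = (1 - lam) * lam * (⟪w' - u', w' - u'⟫ + ⟪w' - v', w' - v'⟫) := by
    field_simp
  rw [hdiv]
  nlinarith [mul_nonpos_of_nonneg_of_nonpos hlam.le hkey]
end
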